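/- Let G be a d×d real matrix whose spectral radius is strictly less than 1 and let Σ be a d×d symmetric positive definite matrix. Then the series ∑_{l=0}^∞ G^l Σ (Gᵀ)^l converges to a symmetric positive definite matrix; writing 𝒜 for its inverse and setting M = 𝒜(I−G)⁻¹ and N = 𝒜(I−G)⁻¹G, one has: M − N = 𝒜, M is invertible with M⁻¹N = G, M⁻¹(Mᵀ+N)M⁻ᵀ = Σ, and for every g ∈ ℝ^d the vector β = 𝒜(I−G)⁻¹g satisfies M⁻¹β = g. In particular 𝒜 = M − N is symmetric and positive definite. -/

import Mathlib

open Matrix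

namespace Ar1Aux

attribute [local instance] Matrix.frobeniusNormedAddCommGroup Matrix.frobeniusNormedRing
  Matrix.frobeniusNormedAlgebra

open Filter

variable {d : ℕ}

lemma entry_abs_le_frobenius (A : Matrix (Fin d) (Fin d) ℝ) (i j : Fin d) : |A i j| ≤ ‖A‖ := by
  rw [frobenius_norm_def]
  have h1 : |A i j| = (|A i j| ^ (2:ℝ)) ^ (1/2:ℝ) := by
    rw [← Real.rpow_mul (abs_nonneg _)]
    norm_num
  rw [h1]
  apply Real.rpow_le_rpow (Real.rpow_nonneg (abs_nonneg _) _) _ (by norm_num)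
  calc |A i j| ^ (2:ℝ) ≤ ∑ j', ‖A i j'‖ ^ (2:ℝ) :=
        Finset.single_le_sum (f := fun j' => ‖A i j'‖ ^ (2:ℝ))
          (fun k _ => Real.rpow_nonneg (norm_nonneg _) _) (Finset.mem_univ j)
    _ ≤ ∑ i', ∑ j', ‖A i' j'‖ ^ (2:ℝ) :=
        Finset.single_le_sum
          (fun k _ => Finset.sum_nonneg fun _ _ => Real.rpow_nonneg (norm_nonneg _) _)
          (Finset.mem_univ i)

lemma norm_pow_eventually_le (G : Matrix (Fin d) (Fin d) ℝ)
    (hG : ∀ μ ∈ spectrum ℂ (G.map (algebraMap ℝ ℂ)), ‖μ‖ < 1) :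
    ∃ r : ℝ, 0 ≤ r ∧ r < 1 ∧ ∃ N : ℕ, ∀ l ≥ N, ‖G ^ l‖ ≤ r ^ l := by
  classical
  haveI : CompleteSpace (Matrix (Fin d) (Fin d) ℂ) := FiniteDimensional.complete ℂ _
  set a : Matrix (Fin d) (Fin d) ℂ := G.map (algebraMap ℝ ℂ) with ha
  have hmapn : ∀ l : ℕ, ‖a ^ l‖₊ = ‖G ^ l‖₊ := by
    intro l
    have h1 : a ^ l = (G ^ l).map (algebraMap ℝ ℂ) := by
      rw [ha, ← RingHom.mapMatrix_apply, ← RingHom.mapMatrix_apply, ← map_pow]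
    rw [h1]
    exact Matrix.frobenius_nnnorm_map_eq _ _ (fun x => Complex.nnnorm_real x)
  have hρ : spectralRadius ℂ a < 1 := by
    rcases (spectrum ℂ a).eq_empty_or_nonempty with h | h
    · simp [spectralRadius, h]
    · have := spectrum.spectralRadius_lt_of_forall_lt_of_nonempty h (r := 1)
        (fun k hk => by simpa [← NNReal.coe_lt_coe] using hG k hk)
      simpa using this
  obtain ⟨r, hρr, hr1⟩ := ENNReal.lt_iff_exists_nnreal_btwn.mp hρ
  have hev : ∀ᶠ n : ℕ in atTop, (‖a ^ n‖₊ : ENNReal) ^ (1 / (n:ℝ)) < (r : ENNReal) := by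
    exact (spectrum.pow_nnnorm_pow_one_div_tendsto_nhds_spectralRadius a).eventually_lt_const hρr
  obtain ⟨N, hN⟩ := eventually_atTop.mp hev
  refine ⟨r, r.coe_nonneg, by exact_mod_cast hr1, max N 1, fun l hl => ?_⟩
  have hl1 : 1 ≤ l := le_trans (le_max_right N 1) hl
  have hlN : N ≤ l := le_trans (le_max_left N 1) hl
  have h1 := (hN l hlN).le
  have hl0 : (l : ℝ) ≠ 0 := by positivity
  have h2 : (‖a ^ l‖₊ : ENNReal) ≤ (r : ENNReal) ^ (l:ℝ) := by
    calc (‖a ^ l‖₊ : ENNReal)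
        = ((‖a ^ l‖₊ : ENNReal) ^ (1 / (l:ℝ))) ^ (l:ℝ) := by
          rw [← ENNReal.rpow_mul, one_div, inv_mul_cancel₀ hl0, ENNReal.rpow_one]
      _ ≤ (r : ENNReal) ^ (l:ℝ) := ENNReal.rpow_le_rpow h1 (Nat.cast_nonneg l)
  rw [ENNReal.rpow_natCast, ← ENNReal.coe_pow, ENNReal.coe_le_coe, hmapn l] at h2
  calc ‖G ^ l‖ = ((‖G ^ l‖₊ : NNReal) : ℝ) := rfl
    _ ≤ ((r ^ l : NNReal) : ℝ) := NNReal.coe_le_coe.mpr h2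
    _ = (r:ℝ) ^ l := by push_cast; ring

lemma summable_entry (G Sg : Matrix (Fin d) (Fin d) ℝ)
    (hG : ∀ μ ∈ spectrum ℂ (G.map (algebraMap ℝ ℂ)), ‖μ‖ < 1) (i j : Fin d) :
    Summable (fun l : ℕ => (G ^ l * Sg * Gᵀ ^ l) i j) := by
  obtain ⟨r, hr0, hr1, N, hN⟩ := norm_pow_eventually_le G hG
  rw [← summable_nat_add_iff N]
  apply Summable.of_norm_bounded (g := fun l => (‖Sg‖ * (r^2)^N) * (r^2)^l)
  · exact (summable_geometric_of_lt_one (by positivity) (by nlinarith)).mul_left _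
  · intro l
    have hb : ‖G ^ (l + N)‖ ≤ r ^ (l + N) := hN _ (Nat.le_add_left N l)
    have ht : ‖(Gᵀ : Matrix (Fin d) (Fin d) ℝ) ^ (l + N)‖ = ‖G ^ (l + N)‖ := by
      rw [← Matrix.transpose_pow, Matrix.frobenius_norm_transpose]
    have hnn : (0:ℝ) ≤ ‖Sg‖ := norm_nonneg _
    calc ‖(G ^ (l+N) * Sg * Gᵀ ^ (l+N)) i j‖
        ≤ ‖G ^ (l+N) * Sg * Gᵀ ^ (l+N)‖ := by
          rw [Real.norm_eq_abs]; exact entry_abs_le_frobenius _ i j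
      _ ≤ ‖G ^ (l+N) * Sg‖ * ‖Gᵀ ^ (l+N)‖ := Matrix.frobenius_norm_mul _ _
      _ ≤ (‖G ^ (l+N)‖ * ‖Sg‖) * ‖Gᵀ ^ (l+N)‖ :=
          mul_le_mul_of_nonneg_right (Matrix.frobenius_norm_mul _ _) (norm_nonneg _)
      _ = ‖G ^ (l+N)‖ * ‖G ^ (l+N)‖ * ‖Sg‖ := by rw [ht]; ring
      _ ≤ (r ^ (l+N)) * (r ^ (l+N)) * ‖Sg‖ :=
          mul_le_mul_of_nonneg_right
            (mul_le_mul hb hb (norm_nonneg _) (by positivity)) hnn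
      _ = (‖Sg‖ * (r^2)^N) * (r^2)^l := by ring

end Ar1Aux

/-- If `G` is a `d × d` real matrix with spectral radius strictly less
than `1` (every complex eigenvalue has modulus `< 1`) and `Sg` is symmetric positive
definite, then the series `∑ₗ Gˡ Sg (Gᵀ)ˡ` converges to a symmetric positive definite
matrix `S`; with `𝒜 := S⁻¹`, `M := 𝒜 (I - G)⁻¹` and `N := 𝒜 (I - G)⁻¹ G` one has
`M - N = 𝒜`, `M` invertible, `M⁻¹ N = G`, `M⁻¹ (Mᵀ + N) M⁻ᵀ = Sg`, and for every `g`,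
the vector `β = 𝒜 (I - G)⁻¹ g` satisfies `M⁻¹ β = g`; in particular `𝒜 = M - N` is
symmetric positive definite. -/
theorem ar1_corresponds_to_matrix_splitting
    {d : ℕ} (G Sg : Matrix (Fin d) (Fin d) ℝ)
    (hG : ∀ μ ∈ spectrum ℂ (G.map (algebraMap ℝ ℂ)), ‖μ‖ < 1)
    (hSg : Sg.PosDef) :
    ∃ S : Matrix (Fin d) (Fin d) ℝ,
      HasSum (fun l : ℕ => G ^ l * Sg * Gᵀ ^ l) S ∧ S.PosDef ∧ S.IsSymm ∧
      (let 𝒜 : Matrix (Fin d) (Fin d) ℝ := S⁻¹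
       let M : Matrix (Fin d) (Fin d) ℝ := 𝒜 * (1 - G)⁻¹
       let N : Matrix (Fin d) (Fin d) ℝ := 𝒜 * (1 - G)⁻¹ * G
       M - N = 𝒜 ∧
       IsUnit M.det ∧
       M⁻¹ * N = G ∧
       M⁻¹ * (Mᵀ + N) * M⁻¹ᵀ = Sg ∧
       (∀ g : Fin d → ℝ, M⁻¹ *ᵥ (𝒜 *ᵥ ((1 - G)⁻¹ *ᵥ g)) = g) ∧
       𝒜.IsSymm ∧ 𝒜.PosDef) := by
  classical
  set f : ℕ → Matrix (Fin d) (Fin d) ℝ := fun l => G ^ l * Sg * Gᵀ ^ l with hfdef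
  have hsm : ∀ i j, Summable (fun l => f l i j) := fun i j => Ar1Aux.summable_entry G Sg hG i j
  set S : Matrix (Fin d) (Fin d) ℝ := Matrix.of (fun i j => ∑' l, f l i j) with hSdef
  have hS : HasSum f S := Pi.hasSum.mpr fun i => Pi.hasSum.mpr fun j => (hsm i j).hasSum
  have hSgT : Sgᵀ = Sg := by
    have h : Sgᴴ = Sg := hSg.1
    rwa [Matrix.conjTranspose_eq_transpose_of_trivial] at h
  have hfsymm : ∀ l, (f l)ᵀ = f l := by
    intro l
    show (G ^ l * Sg * Gᵀ ^ l)ᵀ = G ^ l * Sg * Gᵀ ^ l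
    rw [Matrix.transpose_mul, Matrix.transpose_mul, ← Matrix.transpose_pow,
      Matrix.transpose_transpose, Matrix.transpose_pow, hSgT, mul_assoc]
  have hSsymm : S.IsSymm := by
    show Sᵀ = S
    ext i j
    show S j i = S i j
    simp only [hSdef, Matrix.of_apply]
    refine tsum_congr fun l => ?_
    conv_lhs => rw [← hfsymm l]
    rfl
  -- quadratic forms
  have quad : ∀ x : Fin d → ℝ, HasSum (fun l => x ⬝ᵥ (f l) *ᵥ x) (x ⬝ᵥ S *ᵥ x) := by
    intro x
    let ψ : Matrix (Fin d) (Fin d) ℝ →+ ℝ := AddMonoidHom.mk' (fun A => x ⬝ᵥ A *ᵥ x)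
      (fun A B => by simp [Matrix.add_mulVec, dotProduct_add])
    have hc : Continuous ψ :=
      continuous_const.dotProduct (continuous_id.matrix_mulVec continuous_const)
    exact hS.map ψ hc
  have hterm : ∀ (l : ℕ) (x : Fin d → ℝ),
      x ⬝ᵥ (f l) *ᵥ x = (Gᵀ ^ l *ᵥ x) ⬝ᵥ Sg *ᵥ (Gᵀ ^ l *ᵥ x) := by
    intro l x
    show x ⬝ᵥ (G ^ l * Sg * Gᵀ ^ l) *ᵥ x = _
    rw [← Matrix.mulVec_mulVec, ← Matrix.mulVec_mulVec, Matrix.dotProduct_mulVec x,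
      ← Matrix.mulVec_transpose, Matrix.transpose_pow]
  have hf0 : f 0 = Sg := by
    show G ^ 0 * Sg * Gᵀ ^ 0 = Sg
    simp
  have hSpos : S.PosDef := by
    rw [Matrix.posDef_iff_dotProduct_mulVec]
    constructor
    · rw [Matrix.IsHermitian, Matrix.conjTranspose_eq_transpose_of_trivial]
      exact hSsymm
    · intro x hx
      have hq := quad x
      have hnn : ∀ l, 0 ≤ x ⬝ᵥ (f l) *ᵥ x := by
        intro l
        rw [hterm l x]
        have h := hSg.posSemidef.dotProduct_mulVec_nonneg (Gᵀ ^ l *ᵥ x)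
        simpa using h
      have h0 : x ⬝ᵥ (f 0) *ᵥ x ≤ x ⬝ᵥ S *ᵥ x := le_hasSum hq 0 (fun l _ => hnn l)
      have hp : 0 < x ⬝ᵥ (f 0) *ᵥ x := by
        have h := hSg.dotProduct_mulVec_pos hx
        rw [hf0]
        simpa using h
      simpa using lt_of_lt_of_le hp h0
  -- key identity
  have hshift : HasSum (fun l => f (l + 1)) (S - Sg) := by
    have h := (hasSum_nat_add_iff' (f := f) 1).mpr hS
    simpa [hf0] using h
  have hmap : HasSum (fun l => f (l + 1)) (G * S * Gᵀ) := by
    let φ : Matrix (Fin d) (Fin d) ℝ →+ Matrix (Fin d) (Fin d) ℝ :=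
      AddMonoidHom.mk' (fun A => G * A * Gᵀ)
        (fun A B => by simp [Matrix.mul_add, Matrix.add_mul])
    have hc : Continuous φ :=
      (continuous_const.matrix_mul continuous_id).matrix_mul continuous_const
    have h := hS.map φ hc
    have he : (⇑φ ∘ f) = fun l => f (l + 1) := by
      funext l
      show G * (G ^ l * Sg * Gᵀ ^ l) * Gᵀ = G ^ (l+1) * Sg * Gᵀ ^ (l+1)
      rw [pow_succ', pow_succ]
      noncomm_ring
    rwa [he] at h
  have hkey : G * S * Gᵀ = S - Sg := hmap.unique hshift
  -- invertibility of 1 - G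
  have hdet1G : IsUnit (1 - G).det := by
    rw [isUnit_iff_ne_zero]
    intro hz
    have hmem : (1:ℂ) ∈ spectrum ℂ (G.map (algebraMap ℝ ℂ)) := by
      rw [spectrum.mem_iff]
      intro hu
      rw [Matrix.isUnit_iff_isUnit_det] at hu
      have he : (algebraMap ℂ (Matrix (Fin d) (Fin d) ℂ)) 1 - G.map (algebraMap ℝ ℂ)
          = (1 - G).map (algebraMap ℝ ℂ) := by
        ext i j
        simp [Matrix.algebraMap_matrix_apply, Matrix.map_apply, Matrix.sub_apply,
          Matrix.one_apply, apply_ite (algebraMap ℝ ℂ)]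
        split_ifs <;> simp
      rw [he] at hu
      have hd : ((1 - G).map (algebraMap ℝ ℂ)).det = 0 := by
        rw [← RingHom.mapMatrix_apply, ← RingHom.map_det, hz, map_zero]
      rw [hd] at hu
      exact (not_isUnit_zero : ¬ IsUnit (0:ℂ)) hu
    have := hG 1 hmem
    simp at this
  have hdetS : IsUnit S.det := isUnit_iff_ne_zero.mpr (ne_of_gt hSpos.det_pos)
  refine ⟨S, hS, hSpos, hSsymm, ?_⟩
  intro 𝒜 M N
  have hSinv2 : S⁻¹ * S = 1 := Matrix.nonsing_inv_mul S hdetS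
  have hBinv2 : (1 - G)⁻¹ * (1 - G) = 1 := Matrix.nonsing_inv_mul _ hdet1G
  have hMN : M - N = 𝒜 := by
    show 𝒜 * (1 - G)⁻¹ - 𝒜 * (1 - G)⁻¹ * G = 𝒜
    rw [← mul_one_sub, mul_assoc, hBinv2, mul_one]
  have hdetM : IsUnit M.det := by
    show IsUnit (S⁻¹ * (1 - G)⁻¹).det
    rw [Matrix.det_mul]
    exact (Matrix.isUnit_nonsing_inv_det S hdetS).mul (Matrix.isUnit_nonsing_inv_det _ hdet1G)
  have hMinv : M⁻¹ = (1 - G) * S := by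
    apply Matrix.inv_eq_right_inv
    show S⁻¹ * (1 - G)⁻¹ * ((1 - G) * S) = 1
    rw [mul_assoc, ← mul_assoc (1 - G)⁻¹, hBinv2, one_mul, hSinv2]
  have hMM : M⁻¹ * M = 1 := Matrix.nonsing_inv_mul M hdetM
  have hMN2 : M⁻¹ * N = G := by
    show M⁻¹ * (M * G) = G
    rw [← mul_assoc, hMM, one_mul]
  have hMT : Mᵀ * M⁻¹ᵀ = 1 := by
    rw [← Matrix.transpose_mul, hMM, Matrix.transpose_one]
  have hMinvT : M⁻¹ᵀ = S * (1 - Gᵀ) := by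
    rw [hMinv, Matrix.transpose_mul, hSsymm, Matrix.transpose_sub, Matrix.transpose_one]
  have hsplit : M⁻¹ * (Mᵀ + N) * M⁻¹ᵀ = Sg := by
    have e1 : M⁻¹ * (Mᵀ + N) * M⁻¹ᵀ = M⁻¹ * (Mᵀ * M⁻¹ᵀ) + (M⁻¹ * N) * M⁻¹ᵀ := by
      noncomm_ring
    rw [e1, hMT, mul_one, hMN2, hMinvT, hMinv]
    have e2 : (1 - G) * S + G * (S * (1 - Gᵀ)) = S - G * S * Gᵀ := by noncomm_ring
    rw [e2, hkey]
    exact sub_sub_cancel S Sg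
  have hg : ∀ g : Fin d → ℝ, M⁻¹ *ᵥ (𝒜 *ᵥ ((1 - G)⁻¹ *ᵥ g)) = g := by
    intro g
    rw [Matrix.mulVec_mulVec, Matrix.mulVec_mulVec, mul_assoc]
    show (M⁻¹ * M) *ᵥ g = g
    rw [hMM, Matrix.one_mulVec]
  have hAsymm : 𝒜.IsSymm := by
    show S⁻¹ᵀ = S⁻¹
    rw [Matrix.transpose_nonsing_inv, hSsymm]
  exact ⟨hMN, hdetM, hMN2, hsplit, hg, hAsymm, hSpos.inv⟩
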